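/- Let φ₁ and φ₂ be indecomposable 𝔖∞-central states on G = Γ≀𝔖∞ (each admitting a GNS triple whose center π(G)′ ∩ π(G)″ consists of scalar multiples of the identity). Let σ_n ∈ 𝔖∞ denote the n-cycle with σ_n(i) = i+1 for i < n, σ_n(n) = 1, and σ_n(i) = i for i > n. If φ₁(σ_n·γ) = φ₂(σ_n·γ) for every n ∈ ℕ and every γ = (γ₁,...,γ_n,e,e,...) ∈ Γ^∞_e with γ_i = e for all i > n, then φ₁ = φ₂. -/

import Mathlib

open scoped Classical ComplexOrder
open Filter Topology

noncomputable section

namespace DN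

local notation "⟪" x ", " y "⟫" => @inner ℂ _ _ x y

/-- The group `𝔖∞` of finitely supported permutations of `ℕ`. -/
def SInf : Subgroup (Equiv.Perm ℕ) where
  carrier := {s | {i | s i ≠ i}.Finite}
  one_mem' := by simp
  mul_mem' := by
    intro s t hs ht
    refine Set.Finite.subset (hs.union ht) fun i hi => ?_
    simp only [Set.mem_setOf_eq, Set.mem_union, Equiv.Perm.mul_apply] at hi ⊢
    by_contra h
    push_neg at h
    rw [h.2, h.1] at hi
    exact hi rfl
  inv_mem' := by
    intro s hs
    refine Set.Finite.subset hs fun i hi => ?_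
    simp only [Set.mem_setOf_eq] at hi ⊢
    intro h
    exact hi (Equiv.Perm.inv_eq_iff_eq.mpr h.symm)

theorem mem_SInf (s : Equiv.Perm ℕ) : s ∈ SInf ↔ {i | s i ≠ i}.Finite := Iff.rfl

/-- The group `Γ^∞_e` of finitely supported sequences in `Γ`. -/
def GammaE (Γ : Type*) [Group Γ] : Subgroup (ℕ → Γ) where
  carrier := {γ | {i | γ i ≠ 1}.Finite}
  one_mem' := by simp
  mul_mem' := by
    intro f g hf hg
    refine Set.Finite.subset (hf.union hg) fun i hi => ?_
    simp only [Set.mem_setOf_eq, Set.mem_union, Pi.mul_apply] at hi ⊢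
    by_contra h
    push_neg at h
    rw [h.1, h.2] at hi
    exact hi (one_mul 1)
  inv_mem' := by
    intro f hf
    refine Set.Finite.subset hf fun i hi => ?_
    simp only [Set.mem_setOf_eq, Pi.inv_apply, ne_eq, inv_eq_one] at hi ⊢
    exact hi

theorem mem_GammaE {Γ : Type*} [Group Γ] (γ : ℕ → Γ) :
    γ ∈ GammaE Γ ↔ {i | γ i ≠ 1}.Finite := Iff.rfl

/-- The permutation action of `Equiv.Perm ℕ` on `ℕ → Γ`. -/
def permMulAut (Γ : Type*) [Group Γ] (s : Equiv.Perm ℕ) : MulAut (ℕ → Γ) where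
  toFun γ := γ ∘ s.symm
  invFun γ := γ ∘ s
  left_inv γ := by funext i; simp [Function.comp]
  right_inv γ := by funext i; simp [Function.comp]
  map_mul' γ δ := rfl

def permAction (Γ : Type*) [Group Γ] : Equiv.Perm ℕ →* MulAut (ℕ → Γ) where
  toFun := permMulAut Γ
  map_one' := by ext γ i; rfl
  map_mul' s t := by ext γ i; rfl

/-- The (big) wreath product `(ℕ → Γ) ⋊ Perm ℕ`. -/
abbrev W (Γ : Type*) [Group Γ] := (ℕ → Γ) ⋊[permAction Γ] Equiv.Perm ℕ

/-- The wreath product `G = Γ ≀ 𝔖∞`, as the subgroup of `W Γ` of finitely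
supported elements. -/
def WG (Γ : Type*) [Group Γ] : Subgroup (W Γ) where
  carrier := {g | {i | g.right i ≠ i}.Finite ∧ {i | g.left i ≠ 1}.Finite}
  one_mem' := by
    constructor
    · convert Set.finite_empty using 1
      ext i; simp
    · convert Set.finite_empty using 1
      ext i; simp
  mul_mem' := by
    rintro a b ⟨ha1, ha2⟩ ⟨hb1, hb2⟩
    constructor
    · refine Set.Finite.subset (ha1.union hb1) fun i hi => ?_
      simp only [Set.mem_setOf_eq, Set.mem_union, SemidirectProduct.mul_right,
        Equiv.Perm.mul_apply] at hi ⊢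
      by_contra h
      push_neg at h
      rw [h.2, h.1] at hi
      exact hi rfl
    · refine Set.Finite.subset (ha2.union (hb2.image a.right)) fun i hi => ?_
      simp only [Set.mem_setOf_eq, SemidirectProduct.mul_left, Pi.mul_apply] at hi
      by_contra h
      simp only [Set.mem_union, Set.mem_setOf_eq, Set.mem_image, not_or, not_exists,
        not_and, not_not] at h
      obtain ⟨h1, h2⟩ := h
      apply hi
      have hb : b.left (a.right⁻¹ i) = 1 := by
        by_contra hc
        exact h2 (a.right⁻¹ i) hc (by simp)
      have hrfl : (permAction Γ a.right b.left) i = b.left (a.right⁻¹ i) := rfl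
      rw [h1, one_mul, hrfl, hb]
  inv_mem' := by
    rintro a ⟨ha1, ha2⟩
    constructor
    · refine Set.Finite.subset ha1 fun i hi => ?_
      simp only [Set.mem_setOf_eq, SemidirectProduct.inv_right] at hi ⊢
      intro h
      exact hi (Equiv.Perm.inv_eq_iff_eq.mpr h.symm)
    · refine Set.Finite.subset (Set.Finite.preimage (a.right.injective.injOn) ha2)
        fun i hi => ?_
      simp only [Set.mem_setOf_eq] at hi
      simp only [Set.mem_preimage, Set.mem_setOf_eq]
      intro h
      apply hi
      have hrfl : (a⁻¹).left i = (a.left (a.right i))⁻¹ := rfl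
      rw [hrfl, h, inv_one]

theorem mem_WG {Γ : Type*} [Group Γ] (g : W Γ) :
    g ∈ WG Γ ↔ {i | g.right i ≠ i}.Finite ∧ {i | g.left i ≠ 1}.Finite := Iff.rfl

/-- The canonical copy of `𝔖∞` inside `Γ ≀ 𝔖∞`. -/
def permW {Γ : Type*} [Group Γ] (s : SInf) : WG Γ :=
  ⟨SemidirectProduct.inr s.1, by
    rw [mem_WG]
    constructor
    · have h : (SemidirectProduct.inr s.1 : W Γ).right = s.1 := SemidirectProduct.right_inr _
      rw [h]
      exact s.2
    · convert Set.finite_empty using 1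
      ext i; simp⟩

/-- The canonical copy of `Γ^∞_e` inside `Γ ≀ 𝔖∞`. -/
def seqW {Γ : Type*} [Group Γ] (γ : GammaE Γ) : WG Γ :=
  ⟨SemidirectProduct.inl γ.1, by
    rw [mem_WG]
    constructor
    · convert Set.finite_empty using 1
      ext i; simp
    · have h : (SemidirectProduct.inl γ.1 : W Γ).left = γ.1 := SemidirectProduct.left_inl _
      rw [h]
      exact γ.2⟩

/-- The support of an element of `Γ ≀ 𝔖∞`. -/
def supp {Γ : Type*} [Group Γ] (g : WG Γ) : Set ℕ :=
  {i | (g : W Γ).right i ≠ i ∨ (g : W Γ).left i ≠ 1}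

/-- Positive definiteness of a function on a group. -/
def IsPosDef {G : Type*} [Group G] (φ : G → ℂ) : Prop :=
  ∀ (m : ℕ) (g : Fin m → G) (c : Fin m → ℂ),
    0 ≤ ∑ i, ∑ j, c i * (starRingEnd ℂ) (c j) * φ ((g j)⁻¹ * g i)

/-- A state on a group: normalized positive definite function. -/
def IsState {G : Type*} [Group G] (φ : G → ℂ) : Prop := φ 1 = 1 ∧ IsPosDef φ

/-- `𝔖∞`-centrality of a function on `Γ ≀ 𝔖∞`. -/
def IsSCentral {Γ : Type*} [Group Γ] (φ : WG Γ → ℂ) : Prop :=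
  ∀ (s : SInf) (g : WG Γ), φ (permW s * g * (permW s)⁻¹) = φ g

/-- The commutant of a set of bounded operators. -/
def commutant {H : Type*} [NormedAddCommGroup H] [InnerProductSpace ℂ H]
    (S : Set (H →L[ℂ] H)) : Set (H →L[ℂ] H) := {T | ∀ A ∈ S, T * A = A * T}

variable {Γ : Type*} [Group Γ]
variable {H : Type*} [NormedAddCommGroup H] [InnerProductSpace ℂ H] [CompleteSpace H]

/-- The image set `π(G)` of a representation. -/
def repSet (π : WG Γ →* (H →L[ℂ] H)) : Set (H →L[ℂ] H) := Set.range fun g : WG Γ => π g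

/-- The von Neumann algebra `π(G)''` (double commutant). -/
def vN (π : WG Γ →* (H →L[ℂ] H)) : Set (H →L[ℂ] H) := commutant (commutant (repSet π))

/-- The representation is factorial: the center `π(G)' ∩ π(G)''` consists of scalars. -/
def IsFactorial (π : WG Γ →* (H →L[ℂ] H)) : Prop :=
  ∀ T ∈ commutant (repSet π) ∩ vN π, ∃ c : ℂ, T = c • (1 : H →L[ℂ] H)

/-- `(π, H, ξ)` is a GNS triple for `φ`. -/
structure IsGNS (φ : WG Γ → ℂ) (π : WG Γ →* (H →L[ℂ] H)) (ξ : H) : Prop where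
  unitary : ∀ g, π g ∈ unitary (H →L[ℂ] H)
  norm_one : ‖ξ‖ = 1
  cyclic : Dense ((Submodule.span ℂ (Set.range fun g : WG Γ => π g ξ) : Submodule ℂ H) : Set H)
  inner_eq : ∀ g, φ g = ⟪ξ, π g ξ⟫

theorem swap_mem_SInf (a b : ℕ) : Equiv.swap a b ∈ SInf := by
  rw [mem_SInf]
  refine Set.Finite.subset ((Set.finite_singleton a).insert b) fun i hi => ?_
  simp only [Set.mem_setOf_eq] at hi
  simp only [Set.mem_insert_iff, Set.mem_singleton_iff]
  by_contra h
  push_neg at h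
  exact hi (Equiv.swap_apply_of_ne_of_ne h.2 h.1)

/-- The transposition `(a b)` as an element of `Γ ≀ 𝔖∞`. -/
def swapW {Γ : Type*} [Group Γ] (a b : ℕ) : WG Γ := permW ⟨Equiv.swap a b, swap_mem_SInf a b⟩

def omegaFun (n i : ℕ) : ℕ := if i < n then i + n else if i < 2 * n then i - n else i

theorem omegaFun_invol (n i : ℕ) : omegaFun n (omegaFun n i) = i := by
  unfold omegaFun
  split_ifs <;> first | contradiction | omega

/-- Olshanski's permutation `ω_n`. -/
def omegaPerm (n : ℕ) : Equiv.Perm ℕ :=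
  ⟨omegaFun n, omegaFun n, omegaFun_invol n, omegaFun_invol n⟩

theorem omegaPerm_mem (n : ℕ) : omegaPerm n ∈ SInf := by
  rw [mem_SInf]
  refine Set.Finite.subset (Set.finite_Iio (2 * n)) fun i hi => ?_
  simp only [Set.mem_setOf_eq] at hi
  simp only [Set.mem_Iio]
  by_contra h
  push_neg at h
  apply hi
  show omegaFun n i = i
  unfold omegaFun
  split_ifs <;> first | contradiction | omega

/-- `ω_n` as an element of `Γ ≀ 𝔖∞`. -/
def omegaW {Γ : Type*} [Group Γ] (n : ℕ) : WG Γ := permW ⟨omegaPerm n, omegaPerm_mem n⟩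

def sigmaFun (n i : ℕ) : ℕ := if i + 1 < n then i + 1 else if i + 1 = n then 0 else i

def sigmaInvFun (n i : ℕ) : ℕ := if i < n then (if i = 0 then n - 1 else i - 1) else i

theorem sigma_left_inv (n i : ℕ) : sigmaInvFun n (sigmaFun n i) = i := by
  unfold sigmaFun sigmaInvFun
  split_ifs <;> first | contradiction | omega

theorem sigma_right_inv (n i : ℕ) : sigmaFun n (sigmaInvFun n i) = i := by
  unfold sigmaFun sigmaInvFun
  split_ifs <;> first | contradiction | omega

/-- The cycle `σ_n = (0 1 2 ... n-1)`. -/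
def sigmaPerm (n : ℕ) : Equiv.Perm ℕ :=
  ⟨sigmaFun n, sigmaInvFun n, sigma_left_inv n, sigma_right_inv n⟩

theorem sigmaPerm_mem (n : ℕ) : sigmaPerm n ∈ SInf := by
  rw [mem_SInf]
  refine Set.Finite.subset (Set.finite_Iio n) fun i hi => ?_
  simp only [Set.mem_setOf_eq] at hi
  simp only [Set.mem_Iio]
  by_contra h
  push_neg at h
  apply hi
  show sigmaFun n i = i
  unfold sigmaFun
  split_ifs <;> first | contradiction | omega

/-- The cycle of `s` through the point `i` (the paper's `s_p` for the orbit `p` of `i`). -/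
def cycleAt (s : Equiv.Perm ℕ) (i : ℕ) : Equiv.Perm ℕ where
  toFun j := if s.SameCycle i j then s j else j
  invFun j := if s.SameCycle i j then s⁻¹ j else j
  left_inv j := by
    by_cases h : s.SameCycle i j
    · have h2 : s.SameCycle i (s j) := Equiv.Perm.sameCycle_apply_right.mpr h
      simp [h, h2]
    · simp [h]
  right_inv j := by
    by_cases h : s.SameCycle i j
    · have h2 : s.SameCycle i (s⁻¹ j) := Equiv.Perm.sameCycle_apply_right.mp (by simpa using h)
      simp [h, h2]
    · simp [h]

theorem cycleAt_mem {s : Equiv.Perm ℕ} (hs : s ∈ SInf) (i : ℕ) : cycleAt s i ∈ SInf := by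
  rw [mem_SInf] at hs ⊢
  refine Set.Finite.subset hs fun j hj => ?_
  simp only [Set.mem_setOf_eq] at hj ⊢
  intro h
  apply hj
  show (if s.SameCycle i j then s j else j) = j
  split_ifs with hc
  · exact h
  · rfl

/-- The generalized cycle of `g = sγ` corresponding to the orbit of `i` under `s`. -/
def genCycle {Γ : Type*} [Group Γ] (g : WG Γ) (i : ℕ) : WG Γ :=
  permW ⟨cycleAt (g : W Γ).right i, cycleAt_mem g.2.1 i⟩ *
  seqW ⟨fun k => if ((g : W Γ).right).SameCycle i k then (g : W Γ).left ((g : W Γ).right k)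
      else 1, by
    rw [mem_GammaE]
    refine Set.Finite.subset (Set.Finite.preimage ((g : W Γ).right.injective.injOn) g.2.2)
      fun k hk => ?_
    simp only [Set.mem_setOf_eq] at hk
    simp only [Set.mem_preimage, Set.mem_setOf_eq]
    by_cases hsc : ((g : W Γ).right).SameCycle i k
    · rw [if_pos hsc] at hk; exact hk
    · rw [if_neg hsc] at hk; exact absurd rfl hk⟩

/-- The von Neumann algebra `𝔄_j` generated by `O_j` and the `π(γ)` with `γ` supported at `j`. -/
def Aj (π : WG Γ →* (H →L[ℂ] H)) (O : H →L[ℂ] H) (j : ℕ) : Set (H →L[ℂ] H) :=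
  commutant (commutant
    ({O} ∪ {T | ∃ γ : GammaE Γ, (∀ i, i ≠ j → (γ : ℕ → Γ) i = 1) ∧ T = π (seqW γ)}))

theorem perm_apply_inv_self' {α : Type*} (s : Equiv.Perm α) (x : α) : s (s⁻¹ x) = x :=
  Equiv.apply_symm_apply s x

theorem perm_inv_apply_self' {α : Type*} (s : Equiv.Perm α) (x : α) : s⁻¹ (s x) = x :=
  Equiv.symm_apply_apply s x

section Comb

variable {Γ : Type*} [Group Γ]

theorem supp_finite (g : WG Γ) : (supp g).Finite := by
  have : supp g = {i | (g : W Γ).right i ≠ i} ∪ {i | (g : W Γ).left i ≠ 1} := Set.setOf_or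
  rw [this]; exact g.2.1.union g.2.2

theorem mem_supp_iff {g : WG Γ} {j : ℕ} :
    j ∈ supp g ↔ (g : W Γ).right j ≠ j ∨ (g : W Γ).left j ≠ 1 := Iff.rfl

theorem not_mem_supp {g : WG Γ} {j : ℕ} (h : j ∉ supp g) :
    (g : W Γ).right j = j ∧ (g : W Γ).left j = 1 := by
  rw [mem_supp_iff, not_or, not_not, not_not] at h; exact h

theorem inv_fix {s : Equiv.Perm ℕ} {j : ℕ} (h : s j = j) : s⁻¹ j = j := by
  conv_lhs => rw [← h]
  exact perm_inv_apply_self' s j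

theorem inv_fix_of_apply_inv_fix {u : Equiv.Perm ℕ} {j : ℕ} (h : u (u⁻¹ j) = u⁻¹ j) :
    u⁻¹ j = j := by
  conv_rhs => rw [← perm_apply_inv_self' u j]
  exact h.symm

/-- coe of products -/
theorem coe_mul (a b : WG Γ) : ((a * b : WG Γ) : W Γ) = (a : W Γ) * (b : W Γ) := rfl
theorem coe_inv (a : WG Γ) : ((a⁻¹ : WG Γ) : W Γ) = ((a : W Γ))⁻¹ := rfl
theorem coe_permW (s : SInf) : ((permW s : WG Γ) : W Γ) = SemidirectProduct.inr s.1 := rfl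
theorem coe_seqW (γ : GammaE Γ) : ((seqW γ : WG Γ) : W Γ) = SemidirectProduct.inl γ.1 := rfl

theorem mul_left_eq (a b : W Γ) :
    (a * b).left = fun j => a.left j * b.left ((a.right).symm j) := rfl
theorem mul_right_eq (a b : W Γ) : (a * b).right = a.right * b.right := rfl

theorem symm_eq_inv (s : Equiv.Perm ℕ) : ⇑(Equiv.symm s) = ⇑(s⁻¹) := rfl

theorem mk_mul_comm (γ δ : ℕ → Γ) (s u : Equiv.Perm ℕ)
    (hdisj : ∀ j, (s j = j ∧ γ j = 1) ∨ (u j = j ∧ δ j = 1)) :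
    (⟨γ, s⟩ : W Γ) * ⟨δ, u⟩ = (⟨δ, u⟩ : W Γ) * ⟨γ, s⟩ := by
  apply SemidirectProduct.ext
  · rw [mul_left_eq, mul_left_eq]
    funext j
    show γ j * δ (s.symm j) = δ j * γ (u.symm j)
    rw [symm_eq_inv, symm_eq_inv]
    rcases hdisj j with ⟨h1, h2⟩ | ⟨h1, h2⟩
    · have hγu : γ (u⁻¹ j) = 1 := by
        rcases hdisj (u⁻¹ j) with ⟨_, hγ⟩ | ⟨hu, _⟩
        · exact hγ
        · rw [inv_fix_of_apply_inv_fix hu]; exact h2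
      rw [h2, one_mul, inv_fix h1, hγu, mul_one]
    · have hδs : δ (s⁻¹ j) = 1 := by
        rcases hdisj (s⁻¹ j) with ⟨hs, _⟩ | ⟨_, hδ⟩
        · rw [inv_fix_of_apply_inv_fix hs]; exact h2
        · exact hδ
      rw [h2, one_mul, inv_fix h1, hδs, mul_one]
  · show s * u = u * s
    apply Equiv.ext
    intro j
    simp only [Equiv.Perm.mul_apply]
    rcases hdisj j with ⟨h1, _⟩ | ⟨h1, _⟩
    · rcases hdisj (u j) with ⟨hs', _⟩ | ⟨hu', _⟩
      · rw [hs', h1]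
      · have : u j = j := u.injective hu'
        rw [this, h1, this]
    · rcases hdisj (s j) with ⟨hs', _⟩ | ⟨hu', _⟩
      · have : s j = j := s.injective hs'
        rw [this, h1, this]
      · rw [hu', h1]

theorem mul_comm_of_disjoint (g h : WG Γ) (hd : Disjoint (supp g) (supp h)) :
    g * h = h * g := by
  apply Subtype.ext
  rw [coe_mul, coe_mul]
  have h1 : (g : W Γ) = ⟨(g : W Γ).left, (g : W Γ).right⟩ := rfl
  have h2 : (h : W Γ) = ⟨(h : W Γ).left, (h : W Γ).right⟩ := rfl
  rw [h1, h2]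
  apply mk_mul_comm
  intro j
  by_cases hj : j ∈ supp g
  · exact Or.inr (not_mem_supp (Set.disjoint_left.mp hd hj))
  · exact Or.inl (not_mem_supp hj)

end Comb
section Conj

variable {Γ : Type*} [Group Γ]

theorem conj_coe (t : SInf) (g : WG Γ) :
    ((permW t * g * (permW t)⁻¹ : WG Γ) : W Γ) =
      ⟨fun j => (g : W Γ).left (t.1⁻¹ j), t.1 * (g : W Γ).right * t.1⁻¹⟩ := by
  rw [coe_mul, coe_mul, coe_inv, coe_permW]
  apply SemidirectProduct.ext
  · funext j
    simp only [SemidirectProduct.mul_left, SemidirectProduct.inv_left, SemidirectProduct.left_inr,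
      SemidirectProduct.right_inr, SemidirectProduct.mul_right, map_one, one_mul, mul_one,
      MulAut.one_apply, Pi.mul_apply, inv_one, Pi.one_apply]
    rfl
  · simp only [SemidirectProduct.mul_right, SemidirectProduct.inv_right, SemidirectProduct.right_inr]

theorem mem_supp_conj {t : SInf} {g : WG Γ} {j : ℕ} :
    j ∈ supp (permW t * g * (permW t)⁻¹) ↔ t.1⁻¹ j ∈ supp g := by
  rw [mem_supp_iff, mem_supp_iff, conj_coe]
  constructor
  · rintro (hr | hl)
    · simp only [Equiv.Perm.mul_apply] at hr
      refine Or.inl fun hc => hr ?_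
      rw [hc]
      exact perm_apply_inv_self' t.1 j
    · exact Or.inr hl
  · rintro (hr | hl)
    · refine Or.inl fun hc => hr ?_
      simp only [Equiv.Perm.mul_apply] at hc
      have := congrArg (⇑t.1⁻¹) hc
      rwa [perm_inv_apply_self'] at this
    · exact Or.inr hl

theorem conj_eq_self {t : SInf} {g : WG Γ} (hfix : ∀ j ∈ supp g, t.1 j = j) :
    permW t * g * (permW t)⁻¹ = g := by
  apply Subtype.ext
  rw [conj_coe]
  apply SemidirectProduct.ext
  · funext j
    show (g : W Γ).left (t.1⁻¹ j) = (g : W Γ).left j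
    by_cases hj : t.1⁻¹ j = j
    · rw [hj]
    · have h1 : t.1⁻¹ j ∉ supp g := fun hc => hj (inv_fix_of_apply_inv_fix (hfix _ hc))
      have h2 : j ∉ supp g := fun hc => hj (inv_fix (hfix _ hc))
      rw [(not_mem_supp h1).2, (not_mem_supp h2).2]
  · apply Equiv.ext
    intro j
    simp only [Equiv.Perm.mul_apply]
    by_cases hj : t.1⁻¹ j = j
    · rw [hj]
      by_cases hj2 : (g : W Γ).right j = j
      · rw [hj2]
        have := congrArg (⇑t.1) hj
        rw [perm_apply_inv_self'] at this
        exact this.symm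
      · exact hfix _ (Or.inl fun hc => hj2 ((g : W Γ).right.injective hc))
    · have h1 : t.1⁻¹ j ∉ supp g := fun hc => hj (inv_fix_of_apply_inv_fix (hfix _ hc))
      have h2 : j ∉ supp g := fun hc => hj (inv_fix (hfix _ hc))
      rw [(not_mem_supp h1).1, perm_apply_inv_self', (not_mem_supp h2).1]
    
end Conj
section Cycle

variable {Γ : Type*} [Group Γ]

theorem cycleAt_apply (s : Equiv.Perm ℕ) (i j : ℕ) :
    cycleAt s i j = if s.SameCycle i j then s j else j := rfl

theorem cycleAt_symm_apply (s : Equiv.Perm ℕ) (i j : ℕ) :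
    (cycleAt s i).symm j = if s.SameCycle i j then s⁻¹ j else j := rfl

theorem genCycle_right_apply (g : WG Γ) (i j : ℕ) :
    ((genCycle g i : WG Γ) : W Γ).right j =
      if ((g : W Γ).right).SameCycle i j then (g : W Γ).right j else j := by
  show ((SemidirectProduct.inr _ * SemidirectProduct.inl _ : W Γ)).right j = _
  simp only [SemidirectProduct.mul_right, SemidirectProduct.right_inr, SemidirectProduct.right_inl,
    mul_one]
  rfl

theorem genCycle_left_apply (g : WG Γ) (i j : ℕ) :
    ((genCycle g i : WG Γ) : W Γ).left j =
      if ((g : W Γ).right).SameCycle i j then (g : W Γ).left j else 1 := by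
  show ((SemidirectProduct.inr _ * SemidirectProduct.inl _ : W Γ)).left j = _
  simp only [SemidirectProduct.mul_left, SemidirectProduct.left_inr, SemidirectProduct.left_inl,
    one_mul]
  show (fun k => if ((g : W Γ).right).SameCycle i k then (g : W Γ).left ((g : W Γ).right k) else 1)
    ((cycleAt (g : W Γ).right i).symm j) = _
  rw [cycleAt_symm_apply]
  by_cases hsc : ((g : W Γ).right).SameCycle i j
  · rw [if_pos hsc]
    simp only
    rw [if_pos (Equiv.Perm.sameCycle_apply_right.mp (by simpa using hsc)), perm_apply_inv_self',
      if_pos hsc]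
  · rw [if_neg hsc]
    simp only
    rw [if_neg hsc, if_neg hsc]

theorem rest_right_apply (g : WG Γ) (i j : ℕ) :
    (((genCycle g i)⁻¹ * g : WG Γ) : W Γ).right j =
      if ((g : W Γ).right).SameCycle i j then j else (g : W Γ).right j := by
  rw [coe_mul, coe_inv, mul_right_eq]
  show ((genCycle g i : WG Γ) : W Γ).right⁻¹ ((g : W Γ).right j) = _
  have h1 : (((genCycle g i : WG Γ) : W Γ).right)⁻¹ = ((genCycle g i : WG Γ) : W Γ).right.symm := rfl
  have h2 : ((genCycle g i : WG Γ) : W Γ).right.symm = (cycleAt (g : W Γ).right i).symm := rfl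
  rw [h1, h2, cycleAt_symm_apply]
  by_cases hsc : ((g : W Γ).right).SameCycle i j
  · rw [if_pos (Equiv.Perm.sameCycle_apply_right.mpr hsc), perm_inv_apply_self', if_pos hsc]
  · rw [if_neg (fun hc => hsc (Equiv.Perm.sameCycle_apply_right.mp hc)), if_neg hsc]

theorem rest_left_apply (g : WG Γ) (i j : ℕ) :
    (((genCycle g i)⁻¹ * g : WG Γ) : W Γ).left j =
      if ((g : W Γ).right).SameCycle i j then 1 else (g : W Γ).left j := by
  rw [coe_mul, coe_inv, mul_left_eq]
  simp only [SemidirectProduct.inv_left, SemidirectProduct.inv_right, Pi.inv_apply]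
  show ((permAction Γ) (((genCycle g i : WG Γ) : W Γ).right)⁻¹) (((genCycle g i : WG Γ) : W Γ).left)⁻¹ j
      * (g : W Γ).left ((((genCycle g i : WG Γ) : W Γ).right⁻¹).symm j) = _
  have h2 : ((genCycle g i : WG Γ) : W Γ).right = cycleAt (g : W Γ).right i := rfl
  have h3 : ∀ f : ℕ → Γ, ((permAction Γ) ((cycleAt (g : W Γ).right i))⁻¹) f
      = fun j => f (cycleAt (g : W Γ).right i j) := fun f => rfl
  rw [h2]
  have h4 : ((cycleAt (g : W Γ).right i)⁻¹).symm = cycleAt (g : W Γ).right i := by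
    ext j; rfl
  rw [h3, h4]
  show (((genCycle g i : WG Γ) : W Γ).left (cycleAt (g : W Γ).right i j))⁻¹
      * (g : W Γ).left (cycleAt (g : W Γ).right i j) = _
  rw [cycleAt_apply]
  by_cases hsc : ((g : W Γ).right).SameCycle i j
  · rw [if_pos hsc, genCycle_left_apply,
      if_pos (Equiv.Perm.sameCycle_apply_right.mpr hsc), inv_mul_cancel, if_pos hsc]
  · rw [if_neg hsc, genCycle_left_apply, if_neg hsc, inv_one, one_mul, if_neg hsc]

theorem supp_genCycle_subset (g : WG Γ) (i : ℕ) :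
    supp (genCycle g i) ⊆ {j | ((g : W Γ).right).SameCycle i j} := by
  intro j hj
  rcases hj with hr | hl
  · rw [genCycle_right_apply] at hr
    by_contra hc
    simp only [Set.mem_setOf_eq] at hc
    rw [if_neg hc] at hr
    exact hr rfl
  · rw [genCycle_left_apply] at hl
    by_contra hc
    simp only [Set.mem_setOf_eq] at hc
    rw [if_neg hc] at hl
    exact hl rfl

theorem supp_rest_subset (g : WG Γ) (i : ℕ) :
    supp ((genCycle g i)⁻¹ * g) ⊆ supp g \ {j | ((g : W Γ).right).SameCycle i j} := by
  intro j hj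
  rcases hj with hr | hl
  · rw [rest_right_apply] at hr
    by_cases hc : ((g : W Γ).right).SameCycle i j
    · rw [if_pos hc] at hr; exact absurd rfl hr
    · rw [if_neg hc] at hr
      exact ⟨Or.inl hr, hc⟩
  · rw [rest_left_apply] at hl
    by_cases hc : ((g : W Γ).right).SameCycle i j
    · rw [if_pos hc] at hl; exact absurd rfl hl
    · rw [if_neg hc] at hl
      exact ⟨Or.inr hl, hc⟩

theorem disjoint_genCycle_rest (g : WG Γ) (i : ℕ) :
    Disjoint (supp (genCycle g i)) (supp ((genCycle g i)⁻¹ * g)) := by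
  refine Set.disjoint_left.mpr fun j hj hj2 => ?_
  exact (supp_rest_subset g i hj2).2 (supp_genCycle_subset g i hj)

end Cycle
section NormalForm

variable {Γ : Type*} [Group Γ]

theorem exists_sort (m : ℕ) (f : ℕ → ℕ) (hf : Set.InjOn f (Set.Iio m)) :
    ∃ t : SInf, ∀ k, k < m → t.1 (f k) = k := by
  induction m with
  | zero => exact ⟨1, fun k hk => absurd hk (Nat.not_lt_zero k)⟩
  | succ m ih =>
    obtain ⟨t, ht⟩ := ih (hf.mono (Set.Iio_subset_Iio (Nat.le_succ m)))
    refine ⟨⟨Equiv.swap (t.1 (f m)) m, swap_mem_SInf _ _⟩ * t, fun k hk => ?_⟩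
    show (Equiv.swap (t.1 (f m)) m) (t.1 (f k)) = k
    rcases Nat.lt_succ_iff_lt_or_eq.mp hk with hk' | rfl
    · rw [ht k hk', Equiv.swap_apply_of_ne_of_ne]
      · intro hc
        have h2 : t.1 (f k) = t.1 (f m) := by rw [ht k hk', hc]
        have h3 : f k = f m := t.1.injective h2
        have : k = m := hf (by exact Nat.lt_succ_of_lt hk') (by exact Nat.lt_succ_self m) h3
        omega
      · exact Nat.ne_of_lt hk'
    · rw [Equiv.swap_apply_left]

theorem sameCycle_iff_pow {s : Equiv.Perm ℕ} {i : ℕ} {m : ℕ} (hm : 0 < m)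
    (hsm : (s ^ m) i = i) (j : ℕ) :
    s.SameCycle i j ↔ ∃ k, k < m ∧ (s ^ k) i = j := by
  have reduce : ∀ k : ℕ, (s ^ k) i = j → ∃ r, r < m ∧ (s ^ r) i = j := by
    intro k
    induction k using Nat.strong_induction_on with
    | _ k ih =>
      intro hk
      by_cases hkm : k < m
      · exact ⟨k, hkm, hk⟩
      · apply ih (k - m) (by omega)
        have hsplit : s ^ k = s ^ (k - m) * s ^ m := by
          rw [← pow_add]; congr 1; omega
        rw [hsplit, Equiv.Perm.mul_apply, hsm] at hk
        exact hk
  constructor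
  · rintro ⟨n, hn⟩
    have hN0 : 0 ≤ n + (m : ℤ) * n.natAbs := by
      have h1 : (1 : ℤ) * n.natAbs ≤ (m : ℤ) * n.natAbs := by
        apply mul_le_mul_of_nonneg_right
        · exact_mod_cast hm
        · exact Int.natCast_nonneg _
      have h2 : -(n.natAbs : ℤ) ≤ n := by
        rw [← Int.abs_eq_natAbs]; exact neg_abs_le n
      linarith
    have hfix : (s ^ ((m : ℤ) * n.natAbs)) i = i := by
      rw [zpow_mul]
      have : (s ^ (m : ℤ)) = s ^ m := zpow_natCast s m
      rw [this]
      exact Equiv.Perm.zpow_apply_eq_self_of_apply_eq_self hsm _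
    have key : (s ^ ((n + (m : ℤ) * n.natAbs).toNat)) i = j := by
      have h3 : (s ^ (n + (m : ℤ) * n.natAbs)) i = j := by
        rw [zpow_add, Equiv.Perm.mul_apply, hfix, hn]
      rw [← h3]
      congr 1
      rw [← zpow_natCast s ((n + (m : ℤ) * n.natAbs).toNat), Int.toNat_of_nonneg hN0]
    exact reduce _ key
  · rintro ⟨k, _, hk⟩
    exact ⟨(k : ℤ), by rw [zpow_natCast]; exact hk⟩

theorem sigmaPerm_lt_iff (m k : ℕ) : sigmaPerm m k < m ↔ k < m := by
  show sigmaFun m k < m ↔ k < m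
  unfold sigmaFun
  split_ifs <;> omega

theorem sigmaPerm_apply_of_ge {m k : ℕ} (h : m ≤ k) : sigmaPerm m k = k := by
  show sigmaFun m k = k
  unfold sigmaFun
  split_ifs <;> omega

theorem genCycle_conj (g : WG Γ) (i : ℕ) :
    ∃ (m : ℕ) (t : SInf) (γ' : GammaE Γ), (∀ k, m ≤ k → (γ' : ℕ → Γ) k = 1) ∧
      permW t * genCycle g i * (permW t)⁻¹ =
        permW ⟨sigmaPerm m, sigmaPerm_mem m⟩ * seqW γ' := by
  set s := (g : W Γ).right with hs
  -- i is periodic for s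
  have hper : ∃ n, 0 < n ∧ (s ^ n) i = i := by
    have hA : {j | s.SameCycle i j}.Finite := by
      refine Set.Finite.subset (g.2.1.insert i) fun j hj => ?_
      simp only [Set.mem_setOf_eq] at hj
      by_cases hij : j = i
      · exact Set.mem_insert_iff.mpr (Or.inl hij)
      · refine Set.mem_insert_iff.mpr (Or.inr ?_)
        show s j ≠ j
        intro hc
        obtain ⟨n, hn⟩ := hj.symm
        rw [Equiv.Perm.zpow_apply_eq_self_of_apply_eq_self hc n] at hn
        exact hij hn
    have : Finite {j | s.SameCycle i j} := hA.to_subtype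
    obtain ⟨a, b, hab, heq⟩ := Finite.exists_ne_map_eq_of_infinite
      (fun k : ℕ => (⟨(s ^ k) i, ⟨(k : ℤ), by rw [zpow_natCast]⟩⟩ : {j | s.SameCycle i j}))
    replace heq : (s ^ a) i = (s ^ b) i := congrArg Subtype.val heq
    rcases Nat.lt_or_ge a b with hab' | hab'
    · refine ⟨b - a, by omega, ?_⟩
      have hsplit : s ^ b = s ^ a * s ^ (b - a) := by rw [← pow_add]; congr 1; omega
      rw [hsplit, Equiv.Perm.mul_apply] at heq
      exact (s ^ a).injective heq.symm
    · have hab'' : b < a := by omega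
      refine ⟨a - b, by omega, ?_⟩
      have hsplit : s ^ a = s ^ b * s ^ (a - b) := by rw [← pow_add]; congr 1; omega
      rw [hsplit, Equiv.Perm.mul_apply] at heq
      exact (s ^ b).injective heq
  obtain ⟨n0, hn0pos, hn0⟩ := hper
  have hiper : i ∈ Function.periodicPts ⇑s :=
    ⟨n0, hn0pos, by show (⇑s)^[n0] i = i; rw [← Equiv.Perm.coe_pow]; exact hn0⟩
  set m := Function.minimalPeriod ⇑s i with hmdef
  have hmpos : 0 < m := Function.minimalPeriod_pos_of_mem_periodicPts hiper
  have hsm : (s ^ m) i = i := by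
    show ⇑(s ^ m) i = i
    rw [Equiv.Perm.coe_pow]
    exact Function.iterate_minimalPeriod
  have hinj : Set.InjOn (fun k => (s ^ k) i) (Set.Iio m) := by
    intro a ha b hb hab
    refine Function.iterate_injOn_Iio_minimalPeriod ha hb ?_
    show (⇑s)^[a] i = (⇑s)^[b] i
    rw [← Equiv.Perm.coe_pow, ← Equiv.Perm.coe_pow]
    exact hab
  obtain ⟨t, ht⟩ := exists_sort m _ hinj
  have hSC : ∀ j, s.SameCycle i j ↔ ∃ k, k < m ∧ (s ^ k) i = j :=
    sameCycle_iff_pow hmpos hsm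
  have hsupp : ∀ k, m ≤ k → ((genCycle g i : WG Γ) : W Γ).left (t.1⁻¹ (sigmaPerm m k)) = 1 := by
    intro k hk
    rw [genCycle_left_apply, if_neg]
    intro hc
    obtain ⟨a, ham, ha⟩ := (hSC _).mp hc
    have h2 := ht a ham
    rw [ha, perm_apply_inv_self'] at h2
    rw [sigmaPerm_apply_of_ge hk] at h2
    omega
  refine ⟨m, t, ⟨fun k => ((genCycle g i : WG Γ) : W Γ).left (t.1⁻¹ (sigmaPerm m k)), ?_⟩,
    hsupp, ?_⟩
  · rw [mem_GammaE]
    refine Set.Finite.subset (Set.finite_Iio m) fun k hk => ?_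
    simp only [Set.mem_setOf_eq] at hk
    simp only [Set.mem_Iio]
    by_contra hc
    exact hk (hsupp k (by omega))
  · apply Subtype.ext
    rw [conj_coe, coe_mul, coe_permW, coe_seqW]
    apply SemidirectProduct.ext
    · funext j
      simp only [SemidirectProduct.mul_left, SemidirectProduct.left_inr, SemidirectProduct.left_inl,
        SemidirectProduct.right_inr, one_mul]
      show ((genCycle g i : WG Γ) : W Γ).left (t.1⁻¹ j)
        = ((genCycle g i : WG Γ) : W Γ).left (t.1⁻¹ (sigmaPerm m ((sigmaPerm m).symm j)))
      rw [Equiv.apply_symm_apply]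
    · simp only [SemidirectProduct.mul_right, SemidirectProduct.right_inr,
        SemidirectProduct.right_inl, mul_one]
      apply Equiv.ext
      intro j
      simp only [Equiv.Perm.mul_apply]
      have hgr : ∀ x, ((genCycle g i : WG Γ) : W Γ).right x
          = if s.SameCycle i x then s x else x := fun x => genCycle_right_apply g i x
      by_cases hj : j < m
      · have hinvj : t.1⁻¹ j = (s ^ j) i :=
          t.1.injective (by rw [perm_apply_inv_self', ht j hj])
        rw [hinvj, hgr, if_pos ⟨(j : ℤ), by rw [zpow_natCast]⟩]
        have hstep : s ((s ^ j) i) = (s ^ (j + 1)) i := by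
          rw [pow_succ', Equiv.Perm.mul_apply]
        rw [hstep]
        by_cases hj1 : j + 1 < m
        · rw [ht (j + 1) hj1]
          show _ = sigmaFun m j
          unfold sigmaFun
          rw [if_pos hj1]
        · have hj1' : j + 1 = m := by omega
          rw [hj1', hsm]
          have h0 : ((s ^ 0) i) = i := by rw [pow_zero]; rfl
          rw [← h0, ht 0 hmpos]
          show _ = sigmaFun m j
          unfold sigmaFun
          rw [if_neg (by omega), if_pos hj1']
      · have hnsc : ¬ s.SameCycle i (t.1⁻¹ j) := by
          intro hc
          obtain ⟨a, ham, ha⟩ := (hSC _).mp hc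
          have h2 := ht a ham
          rw [ha, perm_apply_inv_self'] at h2
          omega
        rw [hgr, if_neg hnsc, perm_apply_inv_self', sigmaPerm_apply_of_ge (by omega)]

end NormalForm
section Mover

theorem exists_mover (F : Finset ℕ) (B : ℕ) (hB : ∀ x ∈ F, x < B) :
    ∃ t : SInf, (∀ x ∈ F, t.1 x = x + B) ∧ (∀ x, x ∉ F → x < B → t.1 x = x) := by
  classical
  set f : ℕ → ℕ := fun x => if x ∈ F then x + B else if B ≤ x ∧ x - B ∈ F then x - B else x
    with hfdef
  have hval1 : ∀ x ∈ F, f x = x + B := fun x hx => by simp only [hfdef, if_pos hx]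
  have hval2 : ∀ x, x ∉ F → ¬(B ≤ x ∧ x - B ∈ F) → f x = x := fun x h1 h2 => by
    simp only [hfdef, if_neg h1, if_neg h2]
  have hval3 : ∀ x, x ∉ F → (B ≤ x ∧ x - B ∈ F) → f x = x - B := fun x h1 h2 => by
    simp only [hfdef, if_neg h1, if_pos h2]
  have hinv : ∀ x, f (f x) = x := by
    intro x
    by_cases h1 : x ∈ F
    · have hx : x < B := hB x h1
      rw [hval1 x h1]
      have h2 : x + B ∉ F := fun hc => by have := hB _ hc; omega
      have h3 : B ≤ x + B ∧ x + B - B ∈ F := ⟨by omega, by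
        have : x + B - B = x := by omega
        rw [this]; exact h1⟩
      rw [hval3 _ h2 h3]
      omega
    · by_cases h2 : B ≤ x ∧ x - B ∈ F
      · rw [hval3 x h1 h2, hval1 _ h2.2]
        omega
      · rw [hval2 x h1 h2, hval2 x h1 h2]
  set e : Equiv.Perm ℕ := ⟨f, f, hinv, hinv⟩ with hedef
  have hmem : e ∈ SInf := by
    rw [mem_SInf]
    refine Set.Finite.subset ((F.finite_toSet).union ((F.finite_toSet).image (fun x => x + B)))
      fun x hx => ?_
    simp only [Set.mem_setOf_eq] at hx
    by_cases h1 : x ∈ F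
    · exact Or.inl h1
    · by_cases h2 : B ≤ x ∧ x - B ∈ F
      · exact Or.inr ⟨x - B, h2.2, show x - B + B = x by omega⟩
      · exact absurd (hval2 x h1 h2) hx
  exact ⟨⟨e, hmem⟩, fun x hx => hval1 x hx, fun x h1 h2 => hval2 x h1 (fun hc => absurd hc.1 (by omega))⟩

end Mover
section Analysis

variable {Γ : Type*} [Group Γ]
variable {H : Type*} [NormedAddCommGroup H] [InnerProductSpace ℂ H] [CompleteSpace H]

theorem unitary_norm_apply {A : H →L[ℂ] H} (hA : A ∈ unitary (H →L[ℂ] H)) (v : H) :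
    ‖A v‖ = ‖v‖ := by
  have h1 : star A * A = 1 := hA.1
  have h2 : ⟪A v, A v⟫ = ⟪v, v⟫ := by
    rw [← ContinuousLinearMap.adjoint_inner_right A v (A v), ← ContinuousLinearMap.star_eq_adjoint]
    show ⟪v, (star A * A) v⟫ = ⟪v, v⟫
    rw [h1, ContinuousLinearMap.one_apply]
  rw [norm_eq_sqrt_re_inner (𝕜 := ℂ) (A v), norm_eq_sqrt_re_inner (𝕜 := ℂ) v, h2]

theorem cluster (π : WG Γ →* (H →L[ℂ] H)) (hu : ∀ g, π g ∈ unitary (H →L[ℂ] H))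
    (hfact : IsFactorial π) (w : ℕ → WG Γ)
    (hcomm : ∀ g' : WG Γ, ∀ᶠ k in (atTop : Filter ℕ), w k * g' = g' * w k) :
    ∃ c : ℂ, ∀ x y : H, Tendsto (fun k => ⟪x, (π (w k)) y⟫)
      (Ultrafilter.of (atTop : Filter ℕ) : Filter ℕ) (𝓝 (c * ⟪x, y⟫)) := by
  set U : Ultrafilter ℕ := Ultrafilter.of (atTop : Filter ℕ) with hU
  have hUle : (U : Filter ℕ) ≤ atTop := Ultrafilter.of_le _
  have hbound : ∀ (x y : H) (k : ℕ), ‖⟪x, (π (w k)) y⟫‖ ≤ ‖x‖ * ‖y‖ := by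
    intro x y k
    calc ‖⟪x, (π (w k)) y⟫‖ ≤ ‖x‖ * ‖(π (w k)) y‖ := norm_inner_le_norm x _
    _ = ‖x‖ * ‖y‖ := by rw [unitary_norm_apply (hu _)]
  have hconv : ∀ x y : H, ∃ L : ℂ, Tendsto (fun k => ⟪x, (π (w k)) y⟫) (U : Filter ℕ) (𝓝 L) := by
    intro x y
    obtain ⟨L, _, hL⟩ := (isCompact_closedBall (0 : ℂ) (‖x‖ * ‖y‖)).ultrafilter_le_nhds
      (U.map (fun k => ⟪x, (π (w k)) y⟫)) (by
        rw [Ultrafilter.coe_map, Filter.le_principal_iff, Filter.mem_map]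
        refine Filter.univ_mem' fun k => ?_
        rw [Set.mem_preimage, mem_closedBall_zero_iff]
        exact hbound x y k)
    exact ⟨L, by rwa [Ultrafilter.coe_map] at hL⟩
  set L : H → H → ℂ := fun x y => (hconv x y).choose with hLdef
  have hL : ∀ x y : H, Tendsto (fun k => ⟪x, (π (w k)) y⟫) (U : Filter ℕ) (𝓝 (L x y)) :=
    fun x y => (hconv x y).choose_spec
  have hLbound : ∀ x y : H, ‖L x y‖ ≤ ‖x‖ * ‖y‖ := fun x y =>
    le_of_tendsto (hL x y).norm (Filter.Eventually.of_forall (hbound x y))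
  -- construct the operator T
  have hT0 : ∀ y : H, ∃ v : H, ∀ x : H, ⟪x, v⟫ = L x y := by
    intro y
    have hadd : ∀ x x' : H, L (x + x') y = L x y + L x' y := by
      intro x x'
      refine tendsto_nhds_unique (l := (U : Filter ℕ)) ?_ ((hL x y).add (hL x' y))
      have heq : (fun k => ⟪x + x', (π (w k)) y⟫)
          = fun k => ⟪x, (π (w k)) y⟫ + ⟪x', (π (w k)) y⟫ := by
        funext k; rw [inner_add_left]
      rw [← heq]
      exact hL (x + x') y
    have hsmul : ∀ (c : ℂ) (x : H), L (c • x) y = (starRingEnd ℂ) c * L x y := by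
      intro c x
      refine tendsto_nhds_unique (l := (U : Filter ℕ)) ?_ ((hL x y).const_mul _)
      have heq : (fun k => ⟪c • x, (π (w k)) y⟫)
          = fun k => (starRingEnd ℂ) c * ⟪x, (π (w k)) y⟫ := by
        funext k; rw [inner_smul_left]
      rw [← heq]
      exact hL (c • x) y
    set flin : H →ₗ[ℂ] ℂ :=
      { toFun := fun x => (starRingEnd ℂ) (L x y)
        map_add' := fun x x' => by
          show (starRingEnd ℂ) (L (x + x') y) = (starRingEnd ℂ) (L x y) + (starRingEnd ℂ) (L x' y)
          rw [hadd, map_add]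
        map_smul' := fun c x => by
          show (starRingEnd ℂ) (L (c • x) y) = (RingHom.id ℂ) c • (starRingEnd ℂ) (L x y)
          rw [hsmul, map_mul, RingHom.id_apply, starRingEnd_self_apply, smul_eq_mul] } with hflindef
    set fcl : H →L[ℂ] ℂ := LinearMap.mkContinuous flin ‖y‖ (fun x => by
      show ‖(starRingEnd ℂ) (L x y)‖ ≤ ‖y‖ * ‖x‖
      rw [RCLike.norm_conj]
      calc ‖L x y‖ ≤ ‖x‖ * ‖y‖ := hLbound x y
      _ = ‖y‖ * ‖x‖ := mul_comm _ _) with hfcldef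
    refine ⟨(InnerProductSpace.toDual ℂ H).symm fcl, fun x => ?_⟩
    have h1 : ⟪(InnerProductSpace.toDual ℂ H).symm fcl, x⟫ = fcl x :=
      InnerProductSpace.toDual_symm_apply
    have h2 : fcl x = (starRingEnd ℂ) (L x y) := rfl
    rw [← inner_conj_symm, h1, h2, starRingEnd_self_apply]
  set T0 : H → H := fun y => (hT0 y).choose with hT0def
  have hT : ∀ (y x : H), ⟪x, T0 y⟫ = L x y := fun y => (hT0 y).choose_spec
  have hTadd : ∀ y y' : H, T0 (y + y') = T0 y + T0 y' := by
    intro y y'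
    refine ext_inner_left ℂ fun x => ?_
    rw [hT, inner_add_right, hT, hT]
    refine tendsto_nhds_unique (l := (U : Filter ℕ)) (hL x (y + y')) ?_
    have heq : (fun k => ⟪x, (π (w k)) y⟫ + ⟪x, (π (w k)) y'⟫)
        = fun k => ⟪x, (π (w k)) (y + y')⟫ := by
      funext k; rw [map_add, inner_add_right]
    rw [← heq]
    exact (hL x y).add (hL x y')
  have hTsmul : ∀ (c : ℂ) (y : H), T0 (c • y) = c • T0 y := by
    intro c y
    refine ext_inner_left ℂ fun x => ?_
    rw [hT, inner_smul_right, hT]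
    refine tendsto_nhds_unique (l := (U : Filter ℕ)) (hL x (c • y)) ?_
    have heq : (fun k => c * ⟪x, (π (w k)) y⟫) = fun k => ⟪x, (π (w k)) (c • y)⟫ := by
      funext k; rw [map_smul, inner_smul_right]
    rw [← heq]
    exact (hL x y).const_mul _
  have hTbound : ∀ y : H, ‖T0 y‖ ≤ 1 * ‖y‖ := by
    intro y
    rw [one_mul]
    have h2 : ⟪T0 y, T0 y⟫ = L (T0 y) y := hT y (T0 y)
    have h3 : ‖T0 y‖ * ‖T0 y‖ ≤ ‖T0 y‖ * ‖y‖ := by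
      calc ‖T0 y‖ * ‖T0 y‖ = RCLike.re ⟪T0 y, T0 y⟫ :=
            (inner_self_eq_norm_mul_norm (𝕜 := ℂ) (T0 y)).symm
      _ ≤ ‖⟪T0 y, T0 y⟫‖ := RCLike.re_le_norm _
      _ = ‖L (T0 y) y‖ := by rw [h2]
      _ ≤ ‖T0 y‖ * ‖y‖ := hLbound _ _
    rcases eq_or_lt_of_le (norm_nonneg (T0 y)) with h0 | h0
    · rw [← h0]; exact norm_nonneg y
    · exact le_of_mul_le_mul_left h3 h0
  set Tlin : H →ₗ[ℂ] H :=
    { toFun := T0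
      map_add' := hTadd
      map_smul' := fun c y => by
        show T0 (c • y) = (RingHom.id ℂ) c • T0 y
        rw [hTsmul, RingHom.id_apply] } with hTlindef
  set T : H →L[ℂ] H := LinearMap.mkContinuous Tlin 1 hTbound with hTdef
  have hTapp : ∀ (y x : H), ⟪x, T y⟫ = L x y := fun y x => hT y x
  have hmem1 : T ∈ commutant (repSet π) := by
    intro A hA
    obtain ⟨g', rfl⟩ := hA
    apply ContinuousLinearMap.ext
    intro y
    refine ext_inner_left ℂ fun x => ?_
    rw [ContinuousLinearMap.mul_apply, ContinuousLinearMap.mul_apply, hTapp,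
      ← ContinuousLinearMap.adjoint_inner_left (π g') (T y) x, hTapp]
    refine tendsto_nhds_unique (l := (U : Filter ℕ)) (hL x ((π g') y)) ?_
    have hev : (fun k => ⟪(ContinuousLinearMap.adjoint (π g')) x, (π (w k)) y⟫)
        =ᶠ[(U : Filter ℕ)] fun k => ⟪x, (π (w k)) ((π g') y)⟫ := by
      refine Filter.EventuallyEq.filter_mono ?_ hUle
      refine (hcomm g').mono fun k hk => ?_
      show ⟪(ContinuousLinearMap.adjoint (π g')) x, (π (w k)) y⟫ = ⟪x, (π (w k)) ((π g') y)⟫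
      rw [ContinuousLinearMap.adjoint_inner_left]
      have h5 : (π (w k)) ((π g') y) = (π g') ((π (w k)) y) := by
        have h6 := congrArg π hk
        rw [map_mul, map_mul] at h6
        calc (π (w k)) ((π g') y) = ((π (w k)) * (π g')) y := rfl
        _ = ((π g') * (π (w k))) y := by rw [h6]
        _ = (π g') ((π (w k)) y) := rfl
      rw [h5]
    exact (hL _ y).congr' hev
  have hmem2 : T ∈ vN π := by
    intro S hS
    have hScomm := hS
    apply ContinuousLinearMap.ext
    intro y
    refine ext_inner_left ℂ fun x => ?_
    rw [ContinuousLinearMap.mul_apply, ContinuousLinearMap.mul_apply, hTapp,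
      ← ContinuousLinearMap.adjoint_inner_left S (T y) x, hTapp]
    refine tendsto_nhds_unique (l := (U : Filter ℕ)) (hL x (S y)) ?_
    have hev : (fun k => ⟪(ContinuousLinearMap.adjoint S) x, (π (w k)) y⟫)
        =ᶠ[(U : Filter ℕ)] fun k => ⟪x, (π (w k)) (S y)⟫ := by
      refine Filter.Eventually.of_forall fun k => ?_
      show ⟪(ContinuousLinearMap.adjoint S) x, (π (w k)) y⟫ = ⟪x, (π (w k)) (S y)⟫
      rw [ContinuousLinearMap.adjoint_inner_left]
      have h5 : (π (w k)) (S y) = S ((π (w k)) y) := by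
        have h6 := hScomm (π (w k)) ⟨w k, rfl⟩
        calc (π (w k)) (S y) = ((π (w k)) * S) y := rfl
        _ = (S * (π (w k))) y := by rw [← h6]
        _ = S ((π (w k)) y) := rfl
      rw [h5]
    exact (hL _ y).congr' hev
  obtain ⟨c, hc⟩ := hfact T ⟨hmem1, hmem2⟩
  refine ⟨c, fun x y => ?_⟩
  have hval : L x y = c * ⟪x, y⟫ := by
    rw [← hTapp y x, hc, ContinuousLinearMap.smul_apply, ContinuousLinearMap.one_apply,
      inner_smul_right]
  rw [← hval]
  exact hL x y

end Analysis
theorem mult_disjoint {Γ : Type*} [Group Γ]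
    {H : Type*} [NormedAddCommGroup H] [InnerProductSpace ℂ H] [CompleteSpace H]
    (φ : WG Γ → ℂ) (hcentral : IsSCentral φ)
    (π : WG Γ →* (H →L[ℂ] H)) (ξ : H) (hGNS : IsGNS φ π ξ) (hfact : IsFactorial π)
    (g h : WG Γ) (hd : Disjoint (supp g) (supp h)) :
    φ (g * h) = φ g * φ h := by
  classical
  obtain ⟨M, hM⟩ := Finset.exists_nat_subset_range
    (((supp_finite g).toFinset) ∪ ((supp_finite h).toFinset))
  have hgM : ∀ x ∈ supp g, x < M := fun x hx => Finset.mem_range.mp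
    (hM (Finset.mem_union_left _ ((supp_finite g).mem_toFinset.mpr hx)))
  have hhM : ∀ x ∈ supp h, x < M := fun x hx => Finset.mem_range.mp
    (hM (Finset.mem_union_right _ ((supp_finite h).mem_toFinset.mpr hx)))
  have hmov : ∀ k : ℕ, ∃ t : SInf, (∀ x ∈ (supp_finite h).toFinset, t.1 x = x + (M + k)) ∧
      (∀ x, x ∉ (supp_finite h).toFinset → x < M + k → t.1 x = x) :=
    fun k => exists_mover _ (M + k) (fun x hx =>
      lt_of_lt_of_le (hhM x ((supp_finite h).mem_toFinset.mp hx)) (by omega))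
  set t : ℕ → SInf := fun k => (hmov k).choose with htdef
  have ht1 : ∀ k, ∀ x ∈ (supp_finite h).toFinset, (t k).1 x = x + (M + k) :=
    fun k => (hmov k).choose_spec.1
  have ht2 : ∀ k, ∀ x, x ∉ (supp_finite h).toFinset → x < M + k → (t k).1 x = x :=
    fun k => (hmov k).choose_spec.2
  set w : ℕ → WG Γ := fun k => permW (t k) * h * (permW (t k))⁻¹ with hwdef
  have hfixg : ∀ k, ∀ j ∈ supp g, (t k).1 j = j := fun k j hj =>
    ht2 k j (fun hc => Set.disjoint_left.mp hd hj ((supp_finite h).mem_toFinset.mp hc))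
      (lt_of_lt_of_le (hgM j hj) (by omega))
  have hval : ∀ k, φ (w k) = φ h := fun k => hcentral (t k) h
  have hgw : ∀ k, φ (g * w k) = φ (g * h) := by
    intro k
    have h2 : permW (t k) * g * (permW (t k))⁻¹ = g := conj_eq_self (hfixg k)
    have h1 : permW (t k) * (g * h) * (permW (t k))⁻¹ = g * w k := by
      calc permW (t k) * (g * h) * (permW (t k))⁻¹
          = (permW (t k) * g * (permW (t k))⁻¹) * (permW (t k) * h * (permW (t k))⁻¹) := by
            group
      _ = g * w k := by rw [h2]
    rw [← h1, hcentral]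
  have hsuppw : ∀ k, ∀ j ∈ supp (w k), M + k ≤ j := by
    intro k j hj
    have hx : (t k).1⁻¹ j ∈ supp h := mem_supp_conj.mp hj
    have h5 : (t k).1 ((t k).1⁻¹ j) = (t k).1⁻¹ j + (M + k) :=
      ht1 k _ ((supp_finite h).mem_toFinset.mpr hx)
    have hj2 : j = (t k).1⁻¹ j + (M + k) := by
      rw [← h5]
      exact (perm_apply_inv_self' _ j).symm
    omega
  have hcomm : ∀ g' : WG Γ, ∀ᶠ k in (atTop : Filter ℕ), w k * g' = g' * w k := by
    intro g'
    obtain ⟨N, hN⟩ := Finset.exists_nat_subset_range (supp_finite g').toFinset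
    refine Filter.eventually_atTop.mpr ⟨N, fun k hk => ?_⟩
    apply mul_comm_of_disjoint
    refine Set.disjoint_left.mpr fun j hj hj' => ?_
    have h1 := hsuppw k j hj
    have h2 : j < N := Finset.mem_range.mp (hN ((supp_finite g').mem_toFinset.mpr hj'))
    omega
  obtain ⟨c, hc⟩ := cluster π hGNS.unitary hfact w hcomm
  have hinner : ⟪ξ, ξ⟫ = 1 := by
    rw [inner_self_eq_norm_sq_to_K, hGNS.norm_one]
    norm_num
  have hch : φ h = c := by
    have h1 := hc ξ ξ
    have h2 : (fun k => ⟪ξ, (π (w k)) ξ⟫) = fun k => φ h := by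
      funext k
      rw [← hGNS.inner_eq (w k), hval k]
    rw [h2] at h1
    have h4 := tendsto_nhds_unique h1 tendsto_const_nhds
    rw [hinner, mul_one] at h4
    exact h4.symm
  have hfinal : Tendsto (fun k => ⟪ξ, (π (g * w k)) ξ⟫) ((Ultrafilter.of (atTop : Filter ℕ) : Ultrafilter ℕ) : Filter ℕ)
      (𝓝 (c * ⟪ξ, (π g) ξ⟫)) := by
    have h1 := hc ((ContinuousLinearMap.adjoint (π g)) ξ) ξ
    have h2 : (fun k => ⟪(ContinuousLinearMap.adjoint (π g)) ξ, (π (w k)) ξ⟫)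
        = fun k => ⟪ξ, (π (g * w k)) ξ⟫ := by
      funext k
      rw [ContinuousLinearMap.adjoint_inner_left]
      have h6 : π (g * w k) = π g * π (w k) := map_mul π g (w k)
      rw [h6]
      rfl
    rw [h2] at h1
    rwa [ContinuousLinearMap.adjoint_inner_left] at h1
  have h3 : (fun k => ⟪ξ, (π (g * w k)) ξ⟫) = fun k => φ (g * h) := by
    funext k
    rw [← hGNS.inner_eq, hgw k]
  rw [h3] at hfinal
  have h4 := tendsto_nhds_unique hfinal tendsto_const_nhds
  rw [← hGNS.inner_eq g] at h4
  rw [← h4, hch]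
  ring
theorem eq_one_of_supp_empty {Γ : Type*} [Group Γ] {g : WG Γ} (h : supp g = ∅) : g = 1 := by
  have hn : ∀ j, j ∉ supp g := fun j => by rw [h]; exact Set.notMem_empty j
  apply Subtype.ext
  show (g : W Γ) = 1
  apply SemidirectProduct.ext
  · rw [SemidirectProduct.one_left]
    funext j
    exact (not_mem_supp (hn j)).2
  · rw [SemidirectProduct.one_right]
    apply Equiv.ext
    intro j
    exact (not_mem_supp (hn j)).1
theorem statement_8 {Γ : Type*} [Group Γ]
    {H₁ : Type*} [NormedAddCommGroup H₁] [InnerProductSpace ℂ H₁] [CompleteSpace H₁]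
    {H₂ : Type*} [NormedAddCommGroup H₂] [InnerProductSpace ℂ H₂] [CompleteSpace H₂]
    (φ₁ φ₂ : WG Γ → ℂ)
    (hstate₁ : IsState φ₁) (hcentral₁ : IsSCentral φ₁)
    (hstate₂ : IsState φ₂) (hcentral₂ : IsSCentral φ₂)
    (π₁ : WG Γ →* (H₁ →L[ℂ] H₁)) (ξ₁ : H₁) (hGNS₁ : IsGNS φ₁ π₁ ξ₁)
    (π₂ : WG Γ →* (H₂ →L[ℂ] H₂)) (ξ₂ : H₂) (hGNS₂ : IsGNS φ₂ π₂ ξ₂)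
    (hfact₁ : IsFactorial π₁) (hfact₂ : IsFactorial π₂)
    (hagree : ∀ (n : ℕ) (γ : GammaE Γ), (∀ i, n ≤ i → (γ : ℕ → Γ) i = 1) →
      φ₁ (permW ⟨sigmaPerm n, sigmaPerm_mem n⟩ * seqW γ) =
      φ₂ (permW ⟨sigmaPerm n, sigmaPerm_mem n⟩ * seqW γ)) :
    φ₁ = φ₂ := by
  have key : ∀ (n : ℕ) (g : WG Γ), (supp_finite g).toFinset.card ≤ n → φ₁ g = φ₂ g := by
    intro n
    induction n with
    | zero =>
      intro g hg
      have hempty : (supp_finite g).toFinset = ∅ := Finset.card_eq_zero.mp (Nat.le_zero.mp hg)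
      rw [(supp_finite g).toFinset_eq_empty] at hempty
      rw [eq_one_of_supp_empty hempty, hstate₁.1, hstate₂.1]
    | succ n ih =>
      intro g hg
      by_cases hsupp : supp g = ∅
      · rw [eq_one_of_supp_empty hsupp, hstate₁.1, hstate₂.1]
      · obtain ⟨i, hi⟩ := Set.nonempty_iff_ne_empty.mpr hsupp
        set r : WG Γ := (genCycle g i)⁻¹ * g with hrdef
        have hgr : g = genCycle g i * r := (mul_inv_cancel_left _ _).symm
        have hdisj := disjoint_genCycle_rest g i
        have h1 : φ₁ g = φ₁ (genCycle g i) * φ₁ r := by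
          conv_lhs => rw [hgr]
          exact mult_disjoint φ₁ hcentral₁ π₁ ξ₁ hGNS₁ hfact₁ _ _ hdisj
        have h2 : φ₂ g = φ₂ (genCycle g i) * φ₂ r := by
          conv_lhs => rw [hgr]
          exact mult_disjoint φ₂ hcentral₂ π₂ ξ₂ hGNS₂ hfact₂ _ _ hdisj
        have hcard : (supp_finite r).toFinset.card ≤ n := by
          have hsub : (supp_finite r).toFinset ⊆ (supp_finite g).toFinset.erase i := by
            intro j hj
            have hj' : j ∈ supp r := (supp_finite r).mem_toFinset.mp hj
            have hj2 := supp_rest_subset g i hj'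
            refine Finset.mem_erase.mpr ⟨?_, (supp_finite g).mem_toFinset.mpr hj2.1⟩
            intro hc
            exact hj2.2 (by rw [hc]; exact Set.mem_setOf_eq ▸ Equiv.Perm.SameCycle.refl _ _)
          have hcg : 1 ≤ (supp_finite g).toFinset.card :=
            Finset.card_pos.mpr ⟨i, (supp_finite g).mem_toFinset.mpr hi⟩
          calc (supp_finite r).toFinset.card
              ≤ ((supp_finite g).toFinset.erase i).card := Finset.card_le_card hsub
          _ = (supp_finite g).toFinset.card - 1 :=
              Finset.card_erase_of_mem ((supp_finite g).mem_toFinset.mpr hi)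
          _ ≤ n := by omega
        have hr := ih r hcard
        have hcyc : φ₁ (genCycle g i) = φ₂ (genCycle g i) := by
          obtain ⟨m, tt, γ', hγ'supp, heq⟩ := genCycle_conj g i
          have e1 : φ₁ (genCycle g i)
              = φ₁ (permW ⟨sigmaPerm m, sigmaPerm_mem m⟩ * seqW γ') := by
            rw [← heq]
            exact (hcentral₁ tt (genCycle g i)).symm
          have e2 : φ₂ (genCycle g i)
              = φ₂ (permW ⟨sigmaPerm m, sigmaPerm_mem m⟩ * seqW γ') := by
            rw [← heq]
            exact (hcentral₂ tt (genCycle g i)).symm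
          rw [e1, e2]
          exact hagree m γ' hγ'supp
        rw [h1, h2, hr, hcyc]
  funext g
  exact key _ g le_rfl

end DN
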